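/- If X follows Pareto(α) with α ∈ (0,1] and U1, U2 are iid uniform on (0,1), r = −1/α ≤ −1, then for 0 < η < θ ≤ 1/2 and every x ≥ 1, the function H(z) = ((x−z)/(1−z))^{1/r} + ∫_{((x−z)/(1−z))^{1/r}}^1 ((x−(1−z)y^{r})/z)^{1/r} dy is increasing in z on (0, 1/2]. -/

import Mathlib

open MeasureTheory ProbabilityTheory Real Finset

noncomputable section

variable {Ω : Type*} [MeasurableSpace Ω]

/-- `X ~ Pareto(α)` : cdf `1 - x^(-α)` for `x ≥ 1`. -/
def IsPareto (P : Measure Ω) (α : ℝ) (X : Ω → ℝ) : Prop :=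
  Measurable X ∧ (∀ x : ℝ, 1 ≤ x → P {ω | x < X ω} = ENNReal.ofReal (x ^ (-α))) ∧
    P {ω | X ω < 1} = 0

/-- the increasing rearrangement of a vector -/
def sortedVec {n : ℕ} (f : Fin n → ℝ) : Fin n → ℝ := f ∘ Tuple.sort f

/-- `MajorizedBy θ η` : `θ ⪯ η`, i.e. equal sums and the sum of the `k` smallest
components of `θ` is at least that of `η` for each `k`. -/
def MajorizedBy {n : ℕ} (θ η : Fin n → ℝ) : Prop :=
  (∑ i, θ i = ∑ i, η i) ∧
  ∀ k : ℕ, k ≤ n →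
    ∑ i ∈ Finset.univ.filter (fun i : Fin n => (i : ℕ) < k), sortedVec η i ≤
    ∑ i ∈ Finset.univ.filter (fun i : Fin n => (i : ℕ) < k), sortedVec θ i

namespace Stmt3

/-- The kernel `σ ^ (-α-1) * (1-σ) ^ (-α)`. -/
def KK (α σ : ℝ) : ℝ := σ ^ (-α - 1) * (1 - σ) ^ (-α)

/-- An antiderivative of the kernel on `(0,1)`. -/
def Psi (α t : ℝ) : ℝ := ∫ σ in (1 / 2 : ℝ)..t, KK α σ

/-- The rewritten form of the portfolio function. -/
def Ht (α x z : ℝ) : ℝ :=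
  (1 - z) ^ α * (x - z) ^ (-α) +
    α * (z * (1 - z)) ^ α * x ^ (-(2 * α)) * (Psi α ((x - z) / x) - Psi α ((1 - z) / x))

/-- The auxiliary function of `t` whose nonnegativity at `t = x` gives the sign of the
`z`-derivative of `Ht`. -/
def hf (α z t : ℝ) : ℝ :=
  α / (1 - z) * t ^ (2 * α) * (z ^ α * (t - 1 + z) ^ (-α) - (1 - z) ^ α * (t - z) ^ (-α)) +
    α ^ 2 * (z * (1 - z)) ^ (α - 1) * (1 - 2 * z) *
      (Psi α ((t - z) / t) - Psi α ((1 - z) / t))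

/-- The derivative of `hf` in `t`. -/
def hD (α z t : ℝ) : ℝ :=
  α ^ 2 * t ^ (2 * α - 1) * (t - 1) *
    (z ^ (α - 1) * (t - 1 + z) ^ (-α - 1) - (1 - z) ^ (α - 1) * (t - z) ^ (-α - 1))

lemma KK_contOn (α : ℝ) : ContinuousOn (KK α) (Set.Ioo 0 1) := by
  intro σ hσ
  have h1 : (σ : ℝ) ≠ 0 := ne_of_gt hσ.1
  have h2 : (1 : ℝ) - σ ≠ 0 := by have := hσ.2; intro h; linarith [sub_eq_zero.mp h]
  exact ((continuousAt_id.rpow_const (Or.inl h1)).mul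
    (((continuous_const.sub continuous_id).continuousAt).rpow_const (Or.inl h2))).continuousWithinAt

lemma KK_intble (α : ℝ) {a b : ℝ} (ha : a ∈ Set.Ioo (0 : ℝ) 1) (hb : b ∈ Set.Ioo (0 : ℝ) 1) :
    IntervalIntegrable (KK α) volume a b :=
  ((KK_contOn α).mono (Set.ordConnected_Ioo.uIcc_subset ha hb)).intervalIntegrable

lemma half_mem : (1 / 2 : ℝ) ∈ Set.Ioo (0 : ℝ) 1 := by norm_num

lemma Psi_hasDeriv (α : ℝ) {t : ℝ} (ht : t ∈ Set.Ioo (0 : ℝ) 1) :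
    HasDerivAt (Psi α) (KK α t) t :=
  intervalIntegral.integral_hasDerivAt_right (KK_intble α half_mem ht)
    (ContinuousOn.stronglyMeasurableAtFilter isOpen_Ioo (KK_contOn α) t ht)
    ((KK_contOn α).continuousAt (isOpen_Ioo.mem_nhds ht))

lemma integral_KK_eq (α : ℝ) {u v : ℝ} (hu : u ∈ Set.Ioo (0 : ℝ) 1)
    (hv : v ∈ Set.Ioo (0 : ℝ) 1) :
    ∫ σ in u..v, KK α σ = Psi α v - Psi α u := by
  have h1 := intervalIntegral.integral_add_adjacent_intervals
    (KK_intble α hu half_mem) (KK_intble α half_mem hv)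
  have h2 : ∫ σ in u..(1 / 2 : ℝ), KK α σ = -Psi α u := intervalIntegral.integral_symm _ _
  rw [h2] at h1
  simp only [Psi] at h1 ⊢
  linarith [h1]


lemma KKv_eq (α : ℝ) {z t : ℝ} (hz0 : 0 < z) (hzt : z < t) :
    KK α ((t - z) / t) = (t - z) ^ (-α - 1) * (z ^ α)⁻¹ * (t ^ (2 * α) * t) := by
  have ht0 : (0 : ℝ) < t := lt_trans hz0 hzt
  have htz : (0 : ℝ) < t - z := by linarith
  unfold KK
  rw [show (1 : ℝ) - (t - z) / t = z / t by field_simp; ring,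
    Real.div_rpow htz.le ht0.le, Real.div_rpow hz0.le ht0.le,
    show (-α - 1 : ℝ) = -(α + 1) by ring, Real.rpow_neg ht0.le (α + 1),
    Real.rpow_neg hz0.le α, Real.rpow_neg ht0.le α,
    Real.rpow_add_one ht0.ne' α, show (2 * α : ℝ) = α + α by ring, Real.rpow_add ht0]
  have h1 : (t : ℝ) ^ α ≠ 0 := (Real.rpow_pos_of_pos ht0 α).ne'
  have h3 : (z : ℝ) ^ α ≠ 0 := (Real.rpow_pos_of_pos hz0 α).ne'
  field_simp

lemma KKu_eq (α : ℝ) {z t : ℝ} (hz1 : z < 1) (h1t : 1 - z < t) :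
    KK α ((1 - z) / t) =
      ((1 - z) ^ (α + 1))⁻¹ * ((t - 1 + z) ^ (-α)) * (t ^ (2 * α) * t) := by
  have hb : (0 : ℝ) < 1 - z := by linarith
  have ht0 : (0 : ℝ) < t := lt_trans hb h1t
  have htb : (0 : ℝ) < t - 1 + z := by linarith
  unfold KK
  rw [show (1 : ℝ) - (1 - z) / t = (t - 1 + z) / t by field_simp; ring,
    Real.div_rpow hb.le ht0.le, Real.div_rpow htb.le ht0.le,
    show (-α - 1 : ℝ) = -(α + 1) by ring, Real.rpow_neg ht0.le (α + 1),
    Real.rpow_neg hb.le (α + 1), Real.rpow_neg ht0.le α,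
    Real.rpow_add_one ht0.ne' α, show (2 * α : ℝ) = α + α by ring, Real.rpow_add ht0]
  have h1 : (t : ℝ) ^ α ≠ 0 := (Real.rpow_pos_of_pos ht0 α).ne'
  have h2 : ((1 : ℝ) - z) ^ (α + 1) ≠ 0 := (Real.rpow_pos_of_pos hb (α + 1)).ne'
  field_simp

lemma hasDerivAt_hf (α : ℝ) (hα0 : 0 < α) {z t : ℝ} (hz0 : 0 < z) (hz2 : z ≤ 1 / 2)
    (ht : 1 ≤ t) : HasDerivAt (hf α z) (hD α z t) t := by
  have hz1 : z < 1 := lt_of_le_of_lt hz2 (by norm_num)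
  have hb : (0 : ℝ) < 1 - z := by linarith
  have ht0 : (0 : ℝ) < t := lt_of_lt_of_le one_pos ht
  have htz : (0 : ℝ) < t - z := by linarith
  have htb : (0 : ℝ) < t - 1 + z := by linarith
  have hvm : (t - z) / t ∈ Set.Ioo (0 : ℝ) 1 :=
    ⟨div_pos htz ht0, (div_lt_one ht0).mpr (by linarith)⟩
  have hum : (1 - z) / t ∈ Set.Ioo (0 : ℝ) 1 :=
    ⟨div_pos hb ht0, (div_lt_one ht0).mpr (by linarith)⟩
  -- derivative of the first part
  have h1 : HasDerivAt (fun s : ℝ => (s - 1 + z) ^ (-α)) (-α * (t - 1 + z) ^ (-α - 1) * 1) t :=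
    HasDerivAt.comp (h₂ := fun x => x ^ (-α)) t (Real.hasDerivAt_rpow_const (p := -α) (Or.inl htb.ne'))
      (((hasDerivAt_id t).sub_const 1).add_const z)
  have h2 : HasDerivAt (fun s : ℝ => (s - z) ^ (-α)) (-α * (t - z) ^ (-α - 1) * 1) t :=
    HasDerivAt.comp (h₂ := fun x => x ^ (-α)) t (Real.hasDerivAt_rpow_const (p := -α) (Or.inl htz.ne'))
      ((hasDerivAt_id t).sub_const z)
  have hbr : HasDerivAt
      (fun s : ℝ => z ^ α * (s - 1 + z) ^ (-α) - (1 - z) ^ α * (s - z) ^ (-α))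
      (z ^ α * (-α * (t - 1 + z) ^ (-α - 1) * 1) -
        (1 - z) ^ α * (-α * (t - z) ^ (-α - 1) * 1)) t :=
    (h1.const_mul _).sub (h2.const_mul _)
  have hpw : HasDerivAt (fun s : ℝ => α / (1 - z) * s ^ (2 * α))
      (α / (1 - z) * (2 * α * t ^ (2 * α - 1))) t :=
    (Real.hasDerivAt_rpow_const (p := 2 * α) (Or.inl ht0.ne')).const_mul _
  have hP1 := hpw.mul hbr
  -- derivative of the second part
  have hvder : HasDerivAt (fun s : ℝ => (s - z) / s) ((1 * t - (t - z) * 1) / t ^ 2) t :=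
    ((hasDerivAt_id t).sub_const z).div (hasDerivAt_id t) ht0.ne'
  have huder : HasDerivAt (fun s : ℝ => (1 - z) / s) ((0 * t - (1 - z) * 1) / t ^ 2) t :=
    (hasDerivAt_const t (1 - z)).div (hasDerivAt_id t) ht0.ne'
  have hPsiv : HasDerivAt (fun s : ℝ => Psi α ((s - z) / s))
      (KK α ((t - z) / t) * ((1 * t - (t - z) * 1) / t ^ 2)) t :=
    HasDerivAt.comp (h := fun s : ℝ => (s - z) / s) t (Psi_hasDeriv α hvm) hvder
  have hPsiu : HasDerivAt (fun s : ℝ => Psi α ((1 - z) / s))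
      (KK α ((1 - z) / t) * ((0 * t - (1 - z) * 1) / t ^ 2)) t :=
    HasDerivAt.comp (h := fun s : ℝ => (1 - z) / s) t (Psi_hasDeriv α hum) huder
  have hP2 := (hPsiv.sub hPsiu).const_mul (α ^ 2 * (z * (1 - z)) ^ (α - 1) * (1 - 2 * z))
  have H := hP1.add hP2
  have hEq : hD α z t =
      α / (1 - z) * (2 * α * t ^ (2 * α - 1)) *
          (z ^ α * (t - 1 + z) ^ (-α) - (1 - z) ^ α * (t - z) ^ (-α)) +
        α / (1 - z) * t ^ (2 * α) *
          (z ^ α * (-α * (t - 1 + z) ^ (-α - 1) * 1) -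
            (1 - z) ^ α * (-α * (t - z) ^ (-α - 1) * 1)) +
        α ^ 2 * (z * (1 - z)) ^ (α - 1) * (1 - 2 * z) *
          (KK α ((t - z) / t) * ((1 * t - (t - z) * 1) / t ^ 2) -
            KK α ((1 - z) / t) * ((0 * t - (1 - z) * 1) / t ^ 2)) := by
    rw [KKv_eq α hz0 (by linarith), KKu_eq α hz1 (by linarith)]
    rw [show (z : ℝ) ^ α = z ^ (α - 1) * z from by
        rw [← Real.rpow_add_one hz0.ne' (α - 1)]; norm_num,
      show ((1 : ℝ) - z) ^ α = (1 - z) ^ (α - 1) * (1 - z) from by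
        rw [← Real.rpow_add_one hb.ne' (α - 1)]; norm_num,
      show ((1 : ℝ) - z) ^ (α + 1) = (1 - z) ^ (α - 1) * (1 - z) * (1 - z) from by
        rw [← Real.rpow_add_one hb.ne' (α - 1), ← Real.rpow_add_one hb.ne']; norm_num,
      show ((t : ℝ) - 1 + z) ^ (-α) = (t - 1 + z) ^ (-α - 1) * (t - 1 + z) from by
        rw [← Real.rpow_add_one htb.ne' (-α - 1)]; norm_num,
      show ((t : ℝ) - z) ^ (-α) = (t - z) ^ (-α - 1) * (t - z) from by
        rw [← Real.rpow_add_one htz.ne' (-α - 1)]; norm_num,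
      show (t : ℝ) ^ (2 * α) = t ^ (2 * α - 1) * t from by
        rw [← Real.rpow_add_one ht0.ne' (2 * α - 1)]; norm_num,
      Real.mul_rpow hz0.le hb.le]
    have a1 : (z : ℝ) ^ (α - 1) ≠ 0 := (Real.rpow_pos_of_pos hz0 _).ne'
    have a2 : ((1 : ℝ) - z) ^ (α - 1) ≠ 0 := (Real.rpow_pos_of_pos hb _).ne'
    have a3 : (t : ℝ) ^ (2 * α - 1) ≠ 0 := (Real.rpow_pos_of_pos ht0 _).ne'
    have a4 : ((t : ℝ) - z) ^ (-α - 1) ≠ 0 := (Real.rpow_pos_of_pos htz _).ne'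
    have a5 : ((t : ℝ) - 1 + z) ^ (-α - 1) ≠ 0 := (Real.rpow_pos_of_pos htb _).ne'
    unfold hD
    field_simp
    ring
  rw [hEq]
  exact H


lemma hD_nonneg (α : ℝ) (hα0 : 0 < α) (hα1 : α ≤ 1) {z t : ℝ} (hz0 : 0 < z)
    (hz2 : z ≤ 1 / 2) (ht : 1 ≤ t) : 0 ≤ hD α z t := by
  have hz1 : z < 1 := lt_of_le_of_lt hz2 (by norm_num)
  have hb : (0 : ℝ) < 1 - z := by linarith
  have ht0 : (0 : ℝ) < t := lt_of_lt_of_le one_pos ht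
  have htz : (0 : ℝ) < t - z := by linarith
  have htb : (0 : ℝ) < t - 1 + z := by linarith
  have h1 : (1 - z) ^ (α - 1) ≤ z ^ (α - 1) :=
    Real.rpow_le_rpow_of_nonpos hz0 (by linarith) (by linarith)
  have h2 : (t - z) ^ (-α - 1) ≤ (t - 1 + z) ^ (-α - 1) :=
    Real.rpow_le_rpow_of_nonpos htb (by linarith) (by linarith)
  have hmul : (1 - z) ^ (α - 1) * (t - z) ^ (-α - 1) ≤
      z ^ (α - 1) * (t - 1 + z) ^ (-α - 1) :=
    mul_le_mul h1 h2 (Real.rpow_nonneg htz.le _) (Real.rpow_nonneg hz0.le _)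
  have hbr : 0 ≤ z ^ (α - 1) * (t - 1 + z) ^ (-α - 1) -
      (1 - z) ^ (α - 1) * (t - z) ^ (-α - 1) := by linarith
  unfold hD
  have : 0 ≤ α ^ 2 * t ^ (2 * α - 1) * (t - 1) := by
    apply mul_nonneg (mul_nonneg (sq_nonneg α) (Real.rpow_nonneg ht0.le _)); linarith
  exact mul_nonneg this hbr

lemma hf_one (α : ℝ) {z : ℝ} (hz0 : 0 < z) (hz1 : z < 1) : hf α z 1 = 0 := by
  have hb : (0 : ℝ) < 1 - z := by linarith
  unfold hf
  rw [show (1 : ℝ) - 1 + z = z by ring, sub_self, ← Real.rpow_add hz0, ← Real.rpow_add hb,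
    show α + -α = (0 : ℝ) by ring]
  simp

lemma hf_nonneg (α : ℝ) (hα0 : 0 < α) (hα1 : α ≤ 1) {x z : ℝ} (hx : 1 ≤ x) (hz0 : 0 < z)
    (hz2 : z ≤ 1 / 2) : 0 ≤ hf α z x := by
  have hz1 : z < 1 := lt_of_le_of_lt hz2 (by norm_num)
  have mono : MonotoneOn (hf α z) (Set.Icc 1 x) := by
    apply monotoneOn_of_deriv_nonneg (convex_Icc 1 x)
    · intro t htI
      exact (hasDerivAt_hf α hα0 hz0 hz2 htI.1).continuousAt.continuousWithinAt
    · rw [interior_Icc]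
      intro t htI
      exact (hasDerivAt_hf α hα0 hz0 hz2 htI.1.le).differentiableAt.differentiableWithinAt
    · rw [interior_Icc]
      intro t htI
      rw [(hasDerivAt_hf α hα0 hz0 hz2 htI.1.le).deriv]
      exact hD_nonneg α hα0 hα1 hz0 hz2 htI.1.le
  calc (0 : ℝ) = hf α z 1 := (hf_one α hz0 hz1).symm
    _ ≤ hf α z x := mono ⟨le_refl 1, hx⟩ ⟨hx, le_refl x⟩ hx

lemma hasDerivAt_Ht (α : ℝ) (hα0 : 0 < α) {x z : ℝ} (hx : 1 ≤ x) (hz0 : 0 < z)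
    (hz2 : z ≤ 1 / 2) : HasDerivAt (Ht α x) (x ^ (-(2 * α)) * hf α z x) z := by
  have hz1 : z < 1 := lt_of_le_of_lt hz2 (by norm_num)
  have hb : (0 : ℝ) < 1 - z := by linarith
  have hx0 : (0 : ℝ) < x := lt_of_lt_of_le one_pos hx
  have hxz : (0 : ℝ) < x - z := by linarith
  have hxb : (0 : ℝ) < x - 1 + z := by linarith
  have hzb : (0 : ℝ) < z * (1 - z) := mul_pos hz0 hb
  have hvm : (x - z) / x ∈ Set.Ioo (0 : ℝ) 1 :=
    ⟨div_pos hxz hx0, (div_lt_one hx0).mpr (by linarith)⟩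
  have hum : (1 - z) / x ∈ Set.Ioo (0 : ℝ) 1 :=
    ⟨div_pos hb hx0, (div_lt_one hx0).mpr (by linarith)⟩
  have hA : HasDerivAt (fun w : ℝ => (1 - w) ^ α) (α * (1 - z) ^ (α - 1) * (0 - 1)) z :=
    (Real.hasDerivAt_rpow_const (p := α) (Or.inl hb.ne')).comp z
      ((hasDerivAt_const z 1).sub (hasDerivAt_id z))
  have hB : HasDerivAt (fun w : ℝ => (x - w) ^ (-α)) (-α * (x - z) ^ (-α - 1) * (0 - 1)) z :=
    (Real.hasDerivAt_rpow_const (p := -α) (Or.inl hxz.ne')).comp z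
      ((hasDerivAt_const z x).sub (hasDerivAt_id z))
  have hc1 := hA.mul hB
  have hW : HasDerivAt (fun w : ℝ => (w * (1 - w)) ^ α)
      (α * (z * (1 - z)) ^ (α - 1) * (1 * (1 - z) + z * (0 - 1))) z :=
    HasDerivAt.comp (h₂ := fun x => x ^ α) z (Real.hasDerivAt_rpow_const (p := α) (Or.inl hzb.ne'))
      ((hasDerivAt_id z).mul ((hasDerivAt_const z 1).sub (hasDerivAt_id z)))
  have hC := (hW.const_mul α).mul_const (x ^ (-(2 * α)))
  have hPz : HasDerivAt (fun w : ℝ => Psi α ((x - w) / x))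
      (KK α ((x - z) / x) * ((0 - 1) / x)) z :=
    HasDerivAt.comp (h := fun w : ℝ => (x - w) / x) z (Psi_hasDeriv α hvm)
      (((hasDerivAt_const z x).sub (hasDerivAt_id z)).div_const x)
  have hQz : HasDerivAt (fun w : ℝ => Psi α ((1 - w) / x))
      (KK α ((1 - z) / x) * ((0 - 1) / x)) z :=
    HasDerivAt.comp (h := fun w : ℝ => (1 - w) / x) z (Psi_hasDeriv α hum)
      (((hasDerivAt_const z 1).sub (hasDerivAt_id z)).div_const x)
  have H := hc1.add (hC.mul (hPz.sub hQz))
  have hEq : x ^ (-(2 * α)) * hf α z x =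
      (α * (1 - z) ^ (α - 1) * (0 - 1) * (x - z) ^ (-α) +
          (1 - z) ^ α * (-α * (x - z) ^ (-α - 1) * (0 - 1))) +
        (α * (α * (z * (1 - z)) ^ (α - 1) * (1 * (1 - z) + z * (0 - 1))) * x ^ (-(2 * α)) *
            (Psi α ((x - z) / x) - Psi α ((1 - z) / x)) +
          α * (z * (1 - z)) ^ α * x ^ (-(2 * α)) *
            (KK α ((x - z) / x) * ((0 - 1) / x) - KK α ((1 - z) / x) * ((0 - 1) / x))) := by
    unfold hf
    rw [KKv_eq α hz0 (by linarith), KKu_eq α hz1 (by linarith)]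
    rw [Real.rpow_neg hx0.le (2 * α)]
    simp only [Real.mul_rpow hz0.le hb.le]
    rw [show (z : ℝ) ^ α = z ^ (α - 1) * z from by
        rw [← Real.rpow_add_one hz0.ne' (α - 1)]; norm_num,
      show ((1 : ℝ) - z) ^ α = (1 - z) ^ (α - 1) * (1 - z) from by
        rw [← Real.rpow_add_one hb.ne' (α - 1)]; norm_num,
      show ((1 : ℝ) - z) ^ (α + 1) = (1 - z) ^ (α - 1) * (1 - z) * (1 - z) from by
        rw [← Real.rpow_add_one hb.ne' (α - 1), ← Real.rpow_add_one hb.ne']; norm_num,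
      show ((x : ℝ) - 1 + z) ^ (-α) = (x - 1 + z) ^ (-α - 1) * (x - 1 + z) from by
        rw [← Real.rpow_add_one hxb.ne' (-α - 1)]; norm_num,
      show ((x : ℝ) - z) ^ (-α) = (x - z) ^ (-α - 1) * (x - z) from by
        rw [← Real.rpow_add_one hxz.ne' (-α - 1)]; norm_num]
    have a1 : (z : ℝ) ^ (α - 1) ≠ 0 := (Real.rpow_pos_of_pos hz0 _).ne'
    have a2 : ((1 : ℝ) - z) ^ (α - 1) ≠ 0 := (Real.rpow_pos_of_pos hb _).ne'
    have a3 : (x : ℝ) ^ (2 * α) ≠ 0 := (Real.rpow_pos_of_pos hx0 _).ne'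
    have a4 : ((x : ℝ) - z) ^ (-α - 1) ≠ 0 := (Real.rpow_pos_of_pos hxz _).ne'
    have a5 : ((x : ℝ) - 1 + z) ^ (-α - 1) ≠ 0 := (Real.rpow_pos_of_pos hxb _).ne'
    field_simp
    ring
  rw [hEq]
  exact H


lemma orig_eq (α : ℝ) (hα0 : 0 < α) {x z : ℝ} (hx : 1 ≤ x) (hz0 : 0 < z)
    (hz2 : z ≤ 1 / 2) :
    ((x - z) / (1 - z)) ^ (-α) +
      ∫ y in (((x - z) / (1 - z)) ^ (-α))..1, ((x - (1 - z) * y ^ (-1 / α)) / z) ^ (-α) =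
    Ht α x z := by
  have hα : α ≠ 0 := hα0.ne'
  have hz1 : z < 1 := lt_of_le_of_lt hz2 (by norm_num)
  have hb : (0 : ℝ) < 1 - z := by linarith
  have hx0 : (0 : ℝ) < x := lt_of_lt_of_le one_pos hx
  have hxz : (0 : ℝ) < x - z := by linarith
  have hxb : (0 : ℝ) < x / (1 - z) := div_pos hx0 hb
  have hq : (0 : ℝ) < (x - z) / (1 - z) := div_pos hxz hb
  have hq1 : (1 : ℝ) ≤ (x - z) / (1 - z) := (le_div_iff₀ hb).mpr (by linarith)
  have hA0 : (0 : ℝ) < ((x - z) / (1 - z)) ^ (-α) := Real.rpow_pos_of_pos hq _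
  have hexp : (-1 : ℝ) / α < 0 := div_neg_of_neg_of_pos (by norm_num) hα0
  have hAinv : (((x - z) / (1 - z)) ^ (-α)) ^ ((-1 : ℝ) / α) = (x - z) / (1 - z) := by
    rw [← Real.rpow_mul hq.le, show -α * (-1 / α) = (1 : ℝ) by field_simp, Real.rpow_one]
  have hp0 : (0 : ℝ) < (1 - z) / x := div_pos hb hx0
  have hpv : (1 - z) / x ≤ (x - z) / x := (div_le_div_iff_of_pos_right hx0).mpr (by linarith)
  have huIcc : Set.uIcc ((1 - z) / x) ((x - z) / x) = Set.Icc ((1 - z) / x) ((x - z) / x) :=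
    Set.uIcc_of_le hpv
  have hv1 : (x - z) / x < 1 := (div_lt_one hx0).mpr (by linarith)
  have hpm : (1 - z) / x ∈ Set.Ioo (0 : ℝ) 1 := ⟨hp0, (div_lt_one hx0).mpr (by linarith)⟩
  have hvm : (x - z) / x ∈ Set.Ioo (0 : ℝ) 1 := ⟨div_pos hxz hx0, hv1⟩
  -- continuity of the integrand g on [A, 1]
  have hbase : ∀ y ∈ Set.Icc (((x - z) / (1 - z)) ^ (-α)) 1,
      (0 : ℝ) < (x - (1 - z) * y ^ ((-1 : ℝ) / α)) / z := by
    intro y hy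
    have h1 : y ^ ((-1 : ℝ) / α) ≤ (((x - z) / (1 - z)) ^ (-α)) ^ ((-1 : ℝ) / α) :=
      Real.rpow_le_rpow_of_nonpos hA0 hy.1 hexp.le
    rw [hAinv] at h1
    have h2 : (1 - z) * y ^ ((-1 : ℝ) / α) ≤ x - z := by
      calc (1 - z) * y ^ ((-1 : ℝ) / α) ≤ (1 - z) * ((x - z) / (1 - z)) :=
            mul_le_mul_of_nonneg_left h1 hb.le
        _ = x - z := by field_simp
    apply div_pos _ hz0
    linarith
  have hgcont : ContinuousOn (fun y : ℝ => ((x - (1 - z) * y ^ ((-1 : ℝ) / α)) / z) ^ (-α))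
      (Set.Icc (((x - z) / (1 - z)) ^ (-α)) 1) := by
    have hy1 : ContinuousOn (fun y : ℝ => y ^ ((-1 : ℝ) / α))
        (Set.Icc (((x - z) / (1 - z)) ^ (-α)) 1) :=
      continuousOn_id.rpow_const fun y hy => Or.inl (lt_of_lt_of_le hA0 hy.1).ne'
    have h2 : ContinuousOn (fun y : ℝ => (x - (1 - z) * y ^ ((-1 : ℝ) / α)) / z)
        (Set.Icc (((x - z) / (1 - z)) ^ (-α)) 1) :=
      (continuousOn_const.sub (continuousOn_const.mul hy1)).div_const z
    exact h2.rpow_const fun y hy => Or.inl (hbase y hy).ne'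
  -- the substitution
  have hφder : ∀ σ ∈ Set.uIcc ((1 - z) / x) ((x - z) / x),
      HasDerivAt (fun σ : ℝ => (x / (1 - z) * σ) ^ (-α))
        (-α * (x / (1 - z) * σ) ^ (-α - 1) * (x / (1 - z) * 1)) σ := by
    intro σ hσ
    rw [huIcc] at hσ
    have hσ0 : (0 : ℝ) < σ := lt_of_lt_of_le hp0 hσ.1
    have hne : x / (1 - z) * σ ≠ 0 := (mul_pos hxb hσ0).ne'
    exact (Real.hasDerivAt_rpow_const (p := -α) (Or.inl hne)).comp σ
      ((hasDerivAt_id σ).const_mul (x / (1 - z)))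
  have hφdcont : ContinuousOn
      (fun σ : ℝ => -α * (x / (1 - z) * σ) ^ (-α - 1) * (x / (1 - z) * 1))
      (Set.uIcc ((1 - z) / x) ((x - z) / x)) := by
    rw [huIcc]
    refine ContinuousOn.mul (ContinuousOn.mul continuousOn_const ?_) continuousOn_const
    exact (continuousOn_const.mul continuousOn_id).rpow_const fun σ hσ =>
      Or.inl (mul_pos hxb (lt_of_lt_of_le hp0 hσ.1)).ne'
  have hφp : (x / (1 - z) * ((1 - z) / x)) ^ (-α) = 1 := by
    rw [show x / (1 - z) * ((1 - z) / x) = 1 by field_simp, Real.one_rpow]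
  have hφv : (x / (1 - z) * ((x - z) / x)) ^ (-α) = ((x - z) / (1 - z)) ^ (-α) := by
    rw [show x / (1 - z) * ((x - z) / x) = (x - z) / (1 - z) by field_simp]
  have himg : (fun σ : ℝ => (x / (1 - z) * σ) ^ (-α)) '' Set.uIcc ((1 - z) / x) ((x - z) / x) ⊆
      Set.Icc (((x - z) / (1 - z)) ^ (-α)) 1 := by
    rintro y ⟨σ, hσ, rfl⟩
    rw [huIcc] at hσ
    have hσ0 : (0 : ℝ) < σ := lt_of_lt_of_le hp0 hσ.1
    constructor
    · have h := Real.rpow_le_rpow_of_nonpos (mul_pos hxb hσ0)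
        (mul_le_mul_of_nonneg_left hσ.2 hxb.le) (by linarith : -α ≤ 0)
      rw [hφv] at h
      exact h
    · have h := Real.rpow_le_rpow_of_nonpos (mul_pos hxb hp0)
        (mul_le_mul_of_nonneg_left hσ.1 hxb.le) (by linarith : -α ≤ 0)
      rw [hφp] at h
      exact h
  have hsubst := intervalIntegral.integral_comp_mul_deriv' (a := (1 - z) / x)
    (b := (x - z) / x) hφder hφdcont (hgcont.mono himg)
  rw [hφp, hφv] at hsubst
  -- pointwise identification of the transformed integrand
  have hPW : ∀ σ ∈ Set.uIcc ((1 - z) / x) ((x - z) / x),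
      (-(((fun y : ℝ => ((x - (1 - z) * y ^ ((-1 : ℝ) / α)) / z) ^ (-α)) ∘
          (fun σ : ℝ => (x / (1 - z) * σ) ^ (-α))) σ *
        (-α * (x / (1 - z) * σ) ^ (-α - 1) * (x / (1 - z) * 1)))) =
      α * (z * (1 - z)) ^ α * x ^ (-(2 * α)) * KK α σ := by
    intro σ hσ
    rw [huIcc] at hσ
    have hσ0 : (0 : ℝ) < σ := lt_of_lt_of_le hp0 hσ.1
    have hσ1 : σ < 1 := lt_of_le_of_lt hσ.2 hv1
    have hσ1' : (0 : ℝ) < 1 - σ := by linarith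
    have hbs : (0 : ℝ) < x / (1 - z) * σ := mul_pos hxb hσ0
    simp only [Function.comp_apply]
    rw [← Real.rpow_mul hbs.le, show -α * (-1 / α) = (1 : ℝ) by field_simp, Real.rpow_one,
      show x - (1 - z) * (x / (1 - z) * σ) = x * (1 - σ) by field_simp]
    unfold KK
    rw [Real.div_rpow (mul_nonneg hx0.le hσ1'.le) hz0.le,
      Real.mul_rpow hx0.le hσ1'.le,
      Real.mul_rpow hxb.le hσ0.le,
      Real.div_rpow hx0.le hb.le,
      Real.mul_rpow hz0.le hb.le,
      show (-α - 1 : ℝ) = -α + -1 by ring,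
      show (-(2 * α) : ℝ) = -α + -α by ring,
      Real.rpow_add hx0, Real.rpow_add hx0, Real.rpow_add hb,
      Real.rpow_neg_one, Real.rpow_neg_one,
      Real.rpow_neg hz0.le α, Real.rpow_neg hb.le α]
    have a1 : (z : ℝ) ^ α ≠ 0 := (Real.rpow_pos_of_pos hz0 _).ne'
    have a2 : ((1 : ℝ) - z) ^ α ≠ 0 := (Real.rpow_pos_of_pos hb _).ne'
    have a3 : (x : ℝ) ^ (-α) ≠ 0 := (Real.rpow_pos_of_pos hx0 _).ne'
    field_simp
  have hI : (∫ y in (((x - z) / (1 - z)) ^ (-α))..1,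
        ((x - (1 - z) * y ^ ((-1 : ℝ) / α)) / z) ^ (-α)) =
      α * (z * (1 - z)) ^ α * x ^ (-(2 * α)) * (Psi α ((x - z) / x) - Psi α ((1 - z) / x)) := by
    rw [intervalIntegral.integral_symm 1 (((x - z) / (1 - z)) ^ (-α)), ← hsubst,
      ← intervalIntegral.integral_neg, intervalIntegral.integral_congr hPW,
      intervalIntegral.integral_const_mul, integral_KK_eq α hpm hvm]
  have hfirst : ((x - z) / (1 - z)) ^ (-α) = (1 - z) ^ α * (x - z) ^ (-α) := by
    have a2 : ((1 : ℝ) - z) ^ α ≠ 0 := (Real.rpow_pos_of_pos hb _).ne'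
    rw [Real.div_rpow hxz.le hb.le, Real.rpow_neg hb.le]
    field_simp
  rw [hI, hfirst]
  rfl

end Stmt3

theorem stmt_3 (α : ℝ) (hα0 : 0 < α) (hα1 : α ≤ 1) (r : ℝ) (hr : r = -1 / α)
    (x : ℝ) (hx : 1 ≤ x) :
    MonotoneOn (fun z : ℝ =>
      ((x - z) / (1 - z)) ^ (1 / r) +
        ∫ y in (((x - z) / (1 - z)) ^ (1 / r))..1,
          ((x - (1 - z) * y ^ r) / z) ^ (1 / r))
      (Set.Ioc 0 (1 / 2 : ℝ)) := by
  have hx0 : (0 : ℝ) < x := lt_of_lt_of_le one_pos hx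
  subst hr
  have he : (1 : ℝ) / (-1 / α) = -α := by field_simp
  simp only [he]
  have key : MonotoneOn (Stmt3.Ht α x) (Set.Ioc 0 (1 / 2 : ℝ)) := by
    apply monotoneOn_of_deriv_nonneg (convex_Ioc 0 (1 / 2 : ℝ))
    · intro z hz
      exact (Stmt3.hasDerivAt_Ht α hα0 hx hz.1 hz.2).continuousAt.continuousWithinAt
    · rw [interior_Ioc]
      intro z hz
      exact (Stmt3.hasDerivAt_Ht α hα0 hx hz.1 hz.2.le).differentiableAt.differentiableWithinAt
    · rw [interior_Ioc]
      intro z hz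
      rw [(Stmt3.hasDerivAt_Ht α hα0 hx hz.1 hz.2.le).deriv]
      exact mul_nonneg (Real.rpow_nonneg hx0.le _)
        (Stmt3.hf_nonneg α hα0 hα1 hx hz.1 hz.2.le)
  exact key.congr fun z hz => (Stmt3.orig_eq α hα0 hx hz.1 hz.2).symm
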